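/- Downstream classification error bound (Theorem 5.2 / Theorem C.1): Suppose Assumption 1 holds and Assumption 2(A,B) holds for δ, K, M_1,…,M_K with P_X(M_i) > 0 for every i. Let y : X → {1,…,K} be measurable with {x : y(x) = i} ⊆ M_i for every i (Assumption 2(C)), and suppose f : X → S^{d−1} is a meaningful measurable encoder, i.e. Δ_min(f) := min_{i≠j} ‖μ_i(f) − μ_j(f)‖²_E > 0. Then P_X({x ∈ X : ∃ j ≠ y(x) with ‖h(f(x)) − μ_{y(x)}(f)‖_E ≥ ‖h(f(x)) − μ_j(f)‖_E}) ≤ 8(K−1)·𝔞(f) / (Δ_min(f) · min_{1≤i≤K} P_X(M_i)). Since this set contains every point misclassified by any nearest-mean classifier g(x) ∈ argmin_i ‖h(f(x)) − μ_i(f)‖_E with ties broken in favor of y(x), the same quantity bounds the downstream classification error L_Err(f, W_μ, β_μ; y). -/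

import Mathlib

open MeasureTheory
open scoped RealInnerProductSpace ENNReal NNReal

noncomputable section

namespace KCLStatement2

variable {X : Type*} [MeasurableSpace X]

/-- The marginal density `w(x) := ∫ w(x,x') dν(x')`. -/
def marg (ν : Measure X) (w : X → X → ℝ) (x : X) : ℝ := ∫ x', w x x' ∂ν

/-- The similarity function `sim(x,x';λ) := w(x,x')/(w(x)w(x')) − λ`. -/
def simFun (ν : Measure X) (w : X → X → ℝ) (lam : ℝ) (x x' : X) : ℝ :=
  w x x' / (marg ν w x * marg ν w x') - lam

variable {E : Type*} [NormedAddCommGroup E] [InnerProductSpace ℝ E]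

/-- The kernel contrastive loss
`L_KCL(f;λ) = −∫∫ k(f x, f x') w(x,x') + λ ∫∫ k(f x, f x') w(x)w(x')`,
where `k(z,z') = ⟪h z, h z'⟫`. -/
def Lkcl {d : ℕ} (ν : Measure X) (w : X → X → ℝ) (h : EuclideanSpace ℝ (Fin d) → E)
    (f : X → EuclideanSpace ℝ (Fin d)) (lam : ℝ) : ℝ :=
  -(∫ x, ∫ x', (⟪h (f x), h (f x')⟫ : ℝ) * w x x' ∂ν ∂ν)
    + lam * ∫ x, ∫ x', (⟪h (f x), h (f x')⟫ : ℝ) * (marg ν w x * marg ν w x') ∂ν ∂ν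

/-- The alignment quantity
`𝔞(f) = Σᵢ ∫∫_{Mᵢ×Mᵢ} ‖h(f x) − h(f x')‖² w(x)w(x')`. -/
def aQuant {d K : ℕ} (ν : Measure X) (w : X → X → ℝ) (h : EuclideanSpace ℝ (Fin d) → E)
    (f : X → EuclideanSpace ℝ (Fin d)) (M : Fin K → Set X) : ℝ :=
  ∑ i, ∫ x in M i, ∫ x' in M i, ‖h (f x) - h (f x')‖ ^ 2 * (marg ν w x * marg ν w x') ∂ν ∂ν

/-- The (unnormalized) cluster mean `∫_{Mᵢ} h(f x) w(x) dν(x)` as a Bochner integral. -/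
def clusterInt [CompleteSpace E] {d K : ℕ} (ν : Measure X) (w : X → X → ℝ)
    (h : EuclideanSpace ℝ (Fin d) → E) (f : X → EuclideanSpace ℝ (Fin d))
    (M : Fin K → Set X) (i : Fin K) : E :=
  ∫ x in M i, marg ν w x • h (f x) ∂ν

/-- The divergence quantity `𝔠(f) = Σ_{i≠j} ⟪∫_{Mᵢ} h(f x) w(x), ∫_{Mⱼ} h(f x') w(x')⟫`. -/
def cQuant [CompleteSpace E] {d K : ℕ} (ν : Measure X) (w : X → X → ℝ)
    (h : EuclideanSpace ℝ (Fin d) → E) (f : X → EuclideanSpace ℝ (Fin d))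
    (M : Fin K → Set X) : ℝ :=
  ∑ i, ∑ j, if i = j then 0 else
    (⟪clusterInt ν w h f M i, clusterInt ν w h f M j⟫ : ℝ)

/-- `P_X(Mᵢ) = ∫_{Mᵢ} w(x) dν(x)`. -/
def PXv (ν : Measure X) (w : X → X → ℝ) {K : ℕ} (M : Fin K → Set X) (i : Fin K) : ℝ :=
  ∫ x in M i, marg ν w x ∂ν

/-- The normalized cluster mean `μᵢ(f) := P_X(Mᵢ)⁻¹ ∫_{Mᵢ} h(f x) w(x) dν(x)`. -/
def muF [CompleteSpace E] {d K : ℕ} (ν : Measure X) (w : X → X → ℝ)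
    (h : EuclideanSpace ℝ (Fin d) → E) (f : X → EuclideanSpace ℝ (Fin d))
    (M : Fin K → Set X) (i : Fin K) : E :=
  (PXv ν w M i)⁻¹ • clusterInt ν w h f M i

/-- `Δ_min(f) := min_{i≠j} ‖μᵢ(f) − μⱼ(f)‖²`. -/
def Dmin [CompleteSpace E] {d K : ℕ} (ν : Measure X) (w : X → X → ℝ)
    (h : EuclideanSpace ℝ (Fin d) → E) (f : X → EuclideanSpace ℝ (Fin d))
    (M : Fin K → Set X) : ℝ :=
  ⨅ p : {q : Fin K × Fin K // q.1 ≠ q.2},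
    ‖muF ν w h f M p.1.1 - muF ν w h f M p.1.2‖ ^ 2

/-- **Downstream classification error bound (Theorem 5.2 / Theorem C.1).**  Under Assumptions
1 and 2(A,B,C), for every meaningful measurable encoder `f` the `P_X`-mass of the set of
points on which the nearest cluster mean disagrees with the label is at most
`8(K−1)·𝔞(f) / (Δ_min(f) · minᵢ P_X(Mᵢ))`. -/
lemma variance_identity {X : Type*} [MeasurableSpace X]
    {E : Type*} [NormedAddCommGroup E] [InnerProductSpace ℝ E] [CompleteSpace E]
    (ν : Measure X) (s : Set X) (m : X → ℝ) (a : X → E) (ψ1 : ℝ)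
    (hna : ∀ x, ‖a x‖ ^ 2 = ψ1)
    (h1 : IntegrableOn m s ν)
    (h2 : IntegrableOn (fun x => m x • a x) s ν)
    (P : ℝ) (c : E)
    (hPdef : P = ∫ x in s, m x ∂ν) (hcdef : c = ∫ x in s, m x • a x ∂ν)
    (hP : P ≠ 0) :
    ∫ x in s, ∫ x' in s, ‖a x - a x'‖ ^ 2 * (m x * m x') ∂ν ∂ν
      = 2 * P * ∫ x in s, ‖a x - P⁻¹ • c‖ ^ 2 * m x ∂ν := by
  have hlin : ∀ (e : E) (α β : ℝ),
      ∫ x in s, (α * m x - β * ⟪e, m x • a x⟫) ∂ν = α * P - β * ⟪e, c⟫ := by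
    intro e α β
    rw [integral_sub (h1.const_mul α) ((h2.const_inner e).const_mul β),
      integral_const_mul, integral_const_mul, integral_inner h2, hPdef, hcdef]
  have hInner : ∀ x, ∫ x' in s, ‖a x - a x'‖ ^ 2 * (m x * m x') ∂ν
      = m x * (2 * ψ1 * P - 2 * ⟪a x, c⟫) := by
    intro x
    have e1 : ∀ x', ‖a x - a x'‖ ^ 2 * (m x * m x')
        = m x * ((2 * ψ1) * m x' - 2 * ⟪a x, m x' • a x'⟫) := by
      intro x'
      rw [norm_sub_sq_real, hna, hna, real_inner_smul_right]; ring
    calc ∫ x' in s, ‖a x - a x'‖ ^ 2 * (m x * m x') ∂ν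
        = ∫ x' in s, m x * ((2 * ψ1) * m x' - 2 * ⟪a x, m x' • a x'⟫) ∂ν := by
          simp only [e1]
      _ = m x * ∫ x' in s, ((2 * ψ1) * m x' - 2 * ⟪a x, m x' • a x'⟫) ∂ν :=
          integral_const_mul _ _
      _ = m x * (2 * ψ1 * P - 2 * ⟪a x, c⟫) := by rw [hlin (a x) (2 * ψ1) 2]
  have hD : ∫ x in s, ∫ x' in s, ‖a x - a x'‖ ^ 2 * (m x * m x') ∂ν ∂ν
      = 2 * ψ1 * P ^ 2 - 2 * ⟪c, c⟫ := by
    calc ∫ x in s, ∫ x' in s, ‖a x - a x'‖ ^ 2 * (m x * m x') ∂ν ∂ν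
        = ∫ x in s, ((2 * ψ1 * P) * m x - 2 * ⟪c, m x • a x⟫) ∂ν := by
          refine integral_congr_ae (Filter.Eventually.of_forall fun x => ?_)
          dsimp only
          rw [hInner x, real_inner_smul_right, real_inner_comm c (a x)]; ring
      _ = (2 * ψ1 * P) * P - 2 * ⟪c, c⟫ := hlin c _ _
      _ = 2 * ψ1 * P ^ 2 - 2 * ⟪c, c⟫ := by ring
  have hV : ∫ x in s, ‖a x - P⁻¹ • c‖ ^ 2 * m x ∂ν
      = (ψ1 + ‖P⁻¹ • c‖ ^ 2) * P - (2 * P⁻¹) * ⟪c, c⟫ := by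
    calc ∫ x in s, ‖a x - P⁻¹ • c‖ ^ 2 * m x ∂ν
        = ∫ x in s, ((ψ1 + ‖P⁻¹ • c‖ ^ 2) * m x - (2 * P⁻¹) * ⟪c, m x • a x⟫) ∂ν := by
          refine integral_congr_ae (Filter.Eventually.of_forall fun x => ?_)
          dsimp only
          rw [norm_sub_sq_real, hna, real_inner_smul_right, real_inner_smul_right,
            real_inner_comm c (a x)]
          ring
      _ = (ψ1 + ‖P⁻¹ • c‖ ^ 2) * P - (2 * P⁻¹) * ⟪c, c⟫ := hlin c _ _
  rw [hD, hV]
  have hn : ‖P⁻¹ • c‖ ^ 2 = P⁻¹ ^ 2 * ‖c‖ ^ 2 := by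
    rw [norm_smul, Real.norm_eq_abs, mul_pow, sq_abs]
  rw [hn, real_inner_self_eq_norm_sq]
  field_simp
  ring

theorem downstream_classification_error_bound
    {X : Type*} [MeasurableSpace X]
    {E : Type*} [NormedAddCommGroup E] [InnerProductSpace ℝ E] [CompleteSpace E]
    {d : ℕ} (hd : 0 < d)
    (ν : Measure X) [SigmaFinite ν]
    (w : X → X → ℝ)
    (hwmeas : Measurable (Function.uncurry w))
    (hwnn : ∀ x x', 0 ≤ w x x')
    (hwint : Integrable (fun p : X × X => w p.1 p.2) (ν.prod ν))
    (hwone : ∫ p, w p.1 p.2 ∂(ν.prod ν) = 1)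
    (hmint : Integrable (marg ν w) ν)
    (hmpos : ∀ x, 0 < marg ν w x)
    -- Assumption 1 on the kernel `k(z,z') = ⟪h z, h z'⟫`
    (h : EuclideanSpace ℝ (Fin d) → E) (hcont : Continuous h)
    (ψ : ℝ → ℝ) (ρ : ℝ≥0) (hψlip : LipschitzOnWith ρ ψ (Set.Icc (-1 : ℝ) 1))
    (hker : ∀ z z' : EuclideanSpace ℝ (Fin d), ‖z‖ = 1 → ‖z'‖ = 1 →
      (⟪h z, h z'⟫ : ℝ) = ψ (⟪z, z'⟫ : ℝ))
    (lam : ℝ) (hlam : 0 ≤ lam)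
    -- Assumption 2(A,B), with clusters of positive mass
    (K : ℕ) (hK : 0 < K) (δ : ℝ)
    (M : Fin K → Set X) (hMmeas : ∀ i, MeasurableSet (M i))
    (hcover : (⋃ i, M i) = Set.univ)
    (hsim : ∀ i : Fin K, ∀ x ∈ M i, ∀ x' ∈ M i, δ ≤ simFun ν w lam x x')
    (hMpos : ∀ i, 0 < PXv ν w M i)
    -- Assumption 2(C): a measurable labeling function compatible with the clusters
    (y : X → Fin K) (hy : Measurable y) (hyM : ∀ i, {x | y x = i} ⊆ M i)
    -- a meaningful measurable encoder
    (f : X → EuclideanSpace ℝ (Fin d)) (hf : Measurable f) (hfs : ∀ x, ‖f x‖ = 1)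
    (hmeaningful : 0 < Dmin ν w h f M) :
    (∫ x in {x : X | ∃ j : Fin K, j ≠ y x ∧
        ‖h (f x) - muF ν w h f M j‖ ≤ ‖h (f x) - muF ν w h f M (y x)‖},
      marg ν w x ∂ν) ≤
      8 * ((K : ℝ) - 1) * aQuant ν w h f M /
        (Dmin ν w h f M * ⨅ i, PXv ν w M i) := by
  classical
  rcases Nat.lt_or_ge K 2 with hK1 | hK2
  · -- K = 1 : the bad set is empty and the bound is zero
    have hKone : K = 1 := by omega
    subst hKone
    have hBempty : {x : X | ∃ j : Fin 1, j ≠ y x ∧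
        ‖h (f x) - muF ν w h f M j‖ ≤ ‖h (f x) - muF ν w h f M (y x)‖} = ∅ := by
      rw [Set.eq_empty_iff_forall_notMem]
      rintro x ⟨j, hj, -⟩
      exact hj (Subsingleton.elim j (y x))
    rw [hBempty, Measure.restrict_empty, integral_zero_measure]
    norm_num
  -- main case : K ≥ 2
  -- X is nonempty
  rcases isEmpty_or_nonempty X with hX | hX
  · exfalso
    have h0 := hMpos ⟨0, hK⟩
    have : M ⟨0, hK⟩ = ∅ := Set.eq_empty_of_isEmpty _
    rw [PXv, this, Measure.restrict_empty, integral_zero_measure] at h0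
    exact lt_irrefl _ h0
  obtain ⟨x0⟩ := hX
  -- basic notation
  set m : X → ℝ := marg ν w with hm_def
  set Δ : ℝ := Dmin ν w h f M with hΔ_def
  set Pm : ℝ := ⨅ i, PXv ν w M i with hPm_def
  set A : ℝ := aQuant ν w h f M with hA_def
  -- norm of the features is constant
  have hψ1 : ∀ x : X, ‖h (f x)‖ ^ 2 = ψ 1 := by
    intro x
    have h2 : (⟪f x, f x⟫ : ℝ) = 1 := by
      rw [real_inner_self_eq_norm_sq, hfs x]; norm_num
    calc ‖h (f x)‖ ^ 2 = ⟪h (f x), h (f x)⟫ := (real_inner_self_eq_norm_sq _).symm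
      _ = ψ (⟪f x, f x⟫ : ℝ) := hker _ _ (hfs x) (hfs x)
      _ = ψ 1 := by rw [h2]
  have hψ1nn : 0 ≤ ψ 1 := by rw [← hψ1 x0]; positivity
  set s1 : ℝ := Real.sqrt (ψ 1) with hs1_def
  have hna : ∀ x, ‖h (f x)‖ = s1 := by
    intro x
    rw [hs1_def, ← hψ1 x, Real.sqrt_sq (norm_nonneg _)]
  -- measurability of the marginal
  have hmSM : StronglyMeasurable m := by
    have := hwmeas.stronglyMeasurable.integral_prod_right' (ν := ν)
    exact this
  have hmm : Measurable m := hmSM.measurable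
  have haSM : StronglyMeasurable (fun x => h (f x)) :=
    hcont.comp_stronglyMeasurable hf.stronglyMeasurable
  -- integrability of the weighted features
  have hwaInt : Integrable (fun x => m x • h (f x)) ν := by
    refine Integrable.mono' (hmint.const_mul s1) (hmSM.smul haSM).aestronglyMeasurable ?_
    filter_upwards with x
    rw [norm_smul, hna x, Real.norm_eq_abs, abs_of_pos (hmpos x), mul_comm]
  have hPne : ∀ i, PXv ν w M i ≠ 0 := fun i => (hMpos i).ne'
  -- norm bound on the cluster means
  have hμnorm : ∀ i, ‖muF ν w h f M i‖ ≤ s1 := by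
    intro i
    rw [muF, norm_smul, Real.norm_eq_abs, abs_of_pos (inv_pos.2 (hMpos i))]
    have hc : ‖clusterInt ν w h f M i‖ ≤ s1 * PXv ν w M i := by
      calc ‖∫ x in M i, m x • h (f x) ∂ν‖
          ≤ ∫ x in M i, ‖m x • h (f x)‖ ∂ν := norm_integral_le_integral_norm _
        _ = ∫ x in M i, s1 * m x ∂ν := by
            refine integral_congr_ae (Filter.Eventually.of_forall fun x => ?_)
            dsimp only
            rw [norm_smul, hna x, Real.norm_eq_abs, abs_of_pos (hmpos x), mul_comm]
        _ = s1 * PXv ν w M i := integral_const_mul _ _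
    calc (PXv ν w M i)⁻¹ * ‖clusterInt ν w h f M i‖
        ≤ (PXv ν w M i)⁻¹ * (s1 * PXv ν w M i) := by
          exact mul_le_mul_of_nonneg_left hc (inv_pos.2 (hMpos i)).le
      _ = s1 := by field_simp [hPne i]
  -- uniform bound on the squared distances to cluster means
  have hGb : ∀ (x : X) (i : Fin K), ‖h (f x) - muF ν w h f M i‖ ^ 2 ≤ 4 * ψ 1 := by
    intro x i
    have hle : ‖h (f x) - muF ν w h f M i‖ ≤ 2 * s1 := by
      calc ‖h (f x) - muF ν w h f M i‖ ≤ ‖h (f x)‖ + ‖muF ν w h f M i‖ := norm_sub_le _ _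
        _ ≤ s1 + s1 := add_le_add (le_of_eq (hna x)) (hμnorm i)
        _ = 2 * s1 := by ring
    calc ‖h (f x) - muF ν w h f M i‖ ^ 2 ≤ (2 * s1) ^ 2 :=
        pow_le_pow_left₀ (norm_nonneg _) hle 2
      _ = 4 * ψ 1 := by rw [mul_pow, hs1_def, Real.sq_sqrt hψ1nn]; norm_num
  -- measurability helper
  have hcompMeas : ∀ (F : Fin K → X → ℝ), (∀ i, Measurable (F i)) →
      Measurable fun x => F (y x) x := by
    intro F hF
    have hEq : (fun x => F (y x) x) = fun x => ∑ i : Fin K, if y x = i then F i x else 0 := by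
      funext x
      rw [Finset.sum_ite_eq]
      simp
    rw [hEq]
    exact Finset.measurable_sum _ fun i _ =>
      Measurable.ite (hy (measurableSet_singleton i)) (hF i) measurable_const
  have hFixMeas : ∀ i : Fin K, Measurable fun x => ‖h (f x) - muF ν w h f M i‖ := by
    intro i
    exact ((hcont.sub continuous_const).norm.measurable).comp hf
  have hGmeas0 : Measurable fun x => ‖h (f x) - muF ν w h f M (y x)‖ :=
    hcompMeas (fun i x => ‖h (f x) - muF ν w h f M i‖) hFixMeas
  have hGmeas : Measurable fun x => ‖h (f x) - muF ν w h f M (y x)‖ ^ 2 :=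
    hGmeas0.pow_const 2
  -- integrability of the weighted squared distances
  have hGint : Integrable (fun x => ‖h (f x) - muF ν w h f M (y x)‖ ^ 2 * m x) ν := by
    refine Integrable.mono' (hmint.const_mul (4 * ψ 1))
      ((hGmeas.mul hmm).aestronglyMeasurable) ?_
    filter_upwards with x
    rw [Real.norm_eq_abs, abs_of_nonneg (mul_nonneg (by positivity) (hmpos x).le)]
    exact mul_le_mul_of_nonneg_right (hGb x _) (hmpos x).le
  have hViInt : ∀ i : Fin K,
      Integrable (fun x => ‖h (f x) - muF ν w h f M i‖ ^ 2 * m x) ν := by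
    intro i
    refine Integrable.mono' (hmint.const_mul (4 * ψ 1))
      (((hFixMeas i).pow_const 2).mul hmm).aestronglyMeasurable ?_
    filter_upwards with x
    rw [Real.norm_eq_abs, abs_of_nonneg (mul_nonneg (by positivity) (hmpos x).le)]
    exact mul_le_mul_of_nonneg_right (hGb x i) (hmpos x).le
  -- positivity facts
  haveI : Nonempty (Fin K) := ⟨⟨0, hK⟩⟩
  have hΔpos : 0 < Δ := hmeaningful
  have hbddP : BddBelow (Set.range fun i => PXv ν w M i) := by
    refine ⟨0, ?_⟩
    rintro p ⟨i, rfl⟩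
    exact (hMpos i).le
  have hPmle : ∀ i, Pm ≤ PXv ν w M i := fun i => ciInf_le hbddP i
  have hPmpos : 0 < Pm := by
    obtain ⟨i₀, -, hmin⟩ := Finset.exists_min_image Finset.univ (fun i => PXv ν w M i)
      ⟨⟨0, hK⟩, Finset.mem_univ _⟩
    exact lt_of_lt_of_le (hMpos i₀) (le_ciInf fun i => hmin i (Finset.mem_univ i))
  -- the bad set
  set B : Set X := {x : X | ∃ j : Fin K, j ≠ y x ∧
      ‖h (f x) - muF ν w h f M j‖ ≤ ‖h (f x) - muF ν w h f M (y x)‖} with hB_def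
  have hBmeas : MeasurableSet B := by
    have hBeq : B = ⋃ j : Fin K, ({x | y x = j}ᶜ ∩
        {x | ‖h (f x) - muF ν w h f M j‖ ≤ ‖h (f x) - muF ν w h f M (y x)‖}) := by
      ext x
      simp only [hB_def, Set.mem_setOf_eq, Set.mem_iUnion, Set.mem_inter_iff,
        Set.mem_compl_iff, ne_eq]
      constructor
      · rintro ⟨j, hj, hle⟩
        exact ⟨j, fun hh => hj hh.symm, hle⟩
      · rintro ⟨j, hj, hle⟩
        exact ⟨j, fun hh => hj hh.symm, hle⟩
    rw [hBeq]
    refine MeasurableSet.iUnion fun j => MeasurableSet.inter ?_ ?_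
    · exact (hy (measurableSet_singleton j)).compl
    · exact measurableSet_le (hFixMeas j) hGmeas0
  -- on B the squared distance to the own cluster mean is at least Δ/4
  have hBlow : ∀ x ∈ B, m x ≤ 4 / Δ * (‖h (f x) - muF ν w h f M (y x)‖ ^ 2 * m x) := by
    rintro x ⟨j, hj, hle⟩
    have h1 : Δ ≤ ‖muF ν w h f M j - muF ν w h f M (y x)‖ ^ 2 := by
      have hbdd : BddBelow (Set.range fun p : {q : Fin K × Fin K // q.1 ≠ q.2} =>
          ‖muF ν w h f M p.1.1 - muF ν w h f M p.1.2‖ ^ 2) := by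
        refine ⟨0, ?_⟩
        rintro r ⟨p, rfl⟩
        positivity
      exact ciInf_le hbdd ⟨(j, y x), hj⟩
    have h2 : ‖muF ν w h f M j - muF ν w h f M (y x)‖
        ≤ 2 * ‖h (f x) - muF ν w h f M (y x)‖ := by
      calc ‖muF ν w h f M j - muF ν w h f M (y x)‖
          ≤ ‖muF ν w h f M j - h (f x)‖ + ‖h (f x) - muF ν w h f M (y x)‖ :=
            norm_sub_le_norm_sub_add_norm_sub _ _ _
        _ ≤ ‖h (f x) - muF ν w h f M (y x)‖ + ‖h (f x) - muF ν w h f M (y x)‖ := by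
            rw [norm_sub_rev]
            exact add_le_add hle le_rfl
        _ = 2 * ‖h (f x) - muF ν w h f M (y x)‖ := by ring
    have h3 : Δ ≤ 4 * ‖h (f x) - muF ν w h f M (y x)‖ ^ 2 := by
      calc Δ ≤ ‖muF ν w h f M j - muF ν w h f M (y x)‖ ^ 2 := h1
        _ ≤ (2 * ‖h (f x) - muF ν w h f M (y x)‖) ^ 2 :=
            pow_le_pow_left₀ (norm_nonneg _) h2 2
        _ = 4 * ‖h (f x) - muF ν w h f M (y x)‖ ^ 2 := by ring
    have h4 : (1 : ℝ) ≤ 4 * ‖h (f x) - muF ν w h f M (y x)‖ ^ 2 / Δ :=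
      (one_le_div hΔpos).2 (by linarith)
    calc m x = 1 * m x := (one_mul _).symm
      _ ≤ (4 * ‖h (f x) - muF ν w h f M (y x)‖ ^ 2 / Δ) * m x :=
          mul_le_mul_of_nonneg_right h4 (hmpos x).le
      _ = 4 / Δ * (‖h (f x) - muF ν w h f M (y x)‖ ^ 2 * m x) := by ring
  -- step 1 : Markov-type bound
  have step1 : (∫ x in B, m x ∂ν)
      ≤ 4 / Δ * ∫ x, ‖h (f x) - muF ν w h f M (y x)‖ ^ 2 * m x ∂ν := by
    calc (∫ x in B, m x ∂ν)
        ≤ ∫ x in B, 4 / Δ * (‖h (f x) - muF ν w h f M (y x)‖ ^ 2 * m x) ∂ν :=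
          setIntegral_mono_on hmint.integrableOn (hGint.const_mul _).integrableOn hBmeas hBlow
      _ ≤ ∫ x, 4 / Δ * (‖h (f x) - muF ν w h f M (y x)‖ ^ 2 * m x) ∂ν := by
          refine setIntegral_le_integral (hGint.const_mul _) ?_
          filter_upwards with x
          have := (hmpos x).le
          positivity
      _ = 4 / Δ * ∫ x, ‖h (f x) - muF ν w h f M (y x)‖ ^ 2 * m x ∂ν :=
          integral_const_mul _ _
  -- step 2 : partition the integral along the labels
  have hdisj : Pairwise (Function.onFun Disjoint fun i : Fin K => y ⁻¹' {i}) := by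
    intro i j hij
    rw [Function.onFun, Set.disjoint_left]
    rintro x hxi hxj
    simp only [Set.mem_preimage, Set.mem_singleton_iff] at hxi hxj
    exact hij (hxi.symm.trans hxj)
  have step2 : (∫ x, ‖h (f x) - muF ν w h f M (y x)‖ ^ 2 * m x ∂ν)
      = ∑ i : Fin K, ∫ x in y ⁻¹' {i}, ‖h (f x) - muF ν w h f M (y x)‖ ^ 2 * m x ∂ν := by
    have hu : (⋃ i : Fin K, y ⁻¹' {i}) = Set.univ := by
      ext x; simp
    rw [← setIntegral_univ, ← hu]
    exact integral_iUnion_fintype (fun i => hy (measurableSet_singleton i)) hdisj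
      (fun i => hGint.integrableOn)
  -- step 3 : per-label bound
  have step3 : ∀ i : Fin K,
      (∫ x in y ⁻¹' {i}, ‖h (f x) - muF ν w h f M (y x)‖ ^ 2 * m x ∂ν)
      ≤ ∫ x in M i, ‖h (f x) - muF ν w h f M i‖ ^ 2 * m x ∂ν := by
    intro i
    have hcongr : (∫ x in y ⁻¹' {i}, ‖h (f x) - muF ν w h f M (y x)‖ ^ 2 * m x ∂ν)
        = ∫ x in y ⁻¹' {i}, ‖h (f x) - muF ν w h f M i‖ ^ 2 * m x ∂ν := by
      refine setIntegral_congr_fun (hy (measurableSet_singleton i)) fun x hx => ?_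
      have : y x = i := hx
      rw [this]
    rw [hcongr]
    refine setIntegral_mono_set (hViInt i).integrableOn ?_ ?_
    · filter_upwards with x
      have := (hmpos x).le
      positivity
    · exact Filter.Eventually.of_forall (hyM i)
  -- step 4 : per-cluster variance identity
  have hDi : ∀ i : Fin K,
      (∫ x in M i, ∫ x' in M i, ‖h (f x) - h (f x')‖ ^ 2 * (m x * m x') ∂ν ∂ν)
      = 2 * PXv ν w M i * ∫ x in M i, ‖h (f x) - muF ν w h f M i‖ ^ 2 * m x ∂ν := by
    intro i
    have := variance_identity ν (M i) m (fun x => h (f x)) (ψ 1) hψ1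
      hmint.integrableOn hwaInt.integrableOn (PXv ν w M i) (clusterInt ν w h f M i)
      rfl rfl (hPne i)
    simpa [muF] using this
  have hVnn : ∀ i : Fin K, 0 ≤ ∫ x in M i, ‖h (f x) - muF ν w h f M i‖ ^ 2 * m x ∂ν := by
    intro i
    refine integral_nonneg fun x => ?_
    have := (hmpos x).le
    positivity
  have hDnn : ∀ i : Fin K,
      0 ≤ ∫ x in M i, ∫ x' in M i, ‖h (f x) - h (f x')‖ ^ 2 * (m x * m x') ∂ν ∂ν := by
    intro i
    rw [hDi i]
    have := (hMpos i).le
    have := hVnn i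
    positivity
  have step4 : ∀ i : Fin K,
      (∫ x in M i, ‖h (f x) - muF ν w h f M i‖ ^ 2 * m x ∂ν)
      ≤ (∫ x in M i, ∫ x' in M i, ‖h (f x) - h (f x')‖ ^ 2 * (m x * m x') ∂ν ∂ν)
        / (2 * Pm) := by
    intro i
    have hVeq : (∫ x in M i, ‖h (f x) - muF ν w h f M i‖ ^ 2 * m x ∂ν)
        = (∫ x in M i, ∫ x' in M i, ‖h (f x) - h (f x')‖ ^ 2 * (m x * m x') ∂ν ∂ν)
          / (2 * PXv ν w M i) := by
      rw [hDi i]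
      field_simp [hPne i]
    rw [hVeq]
    exact div_le_div_of_nonneg_left (hDnn i) (by positivity)
      (mul_le_mul_of_nonneg_left (hPmle i) (by norm_num))
  -- assemble
  have hAnn : 0 ≤ A := by
    rw [hA_def, aQuant]
    exact Finset.sum_nonneg fun i _ => hDnn i
  have hsum : (∫ x, ‖h (f x) - muF ν w h f M (y x)‖ ^ 2 * m x ∂ν) ≤ A / (2 * Pm) := by
    rw [step2, hA_def, aQuant, Finset.sum_div]
    exact Finset.sum_le_sum fun i _ => le_trans (step3 i) (step4 i)
  have hmain : (∫ x in B, m x ∂ν) ≤ 4 / Δ * (A / (2 * Pm)) := by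
    refine le_trans step1 ?_
    exact mul_le_mul_of_nonneg_left hsum (by positivity)
  have hfinal : 4 / Δ * (A / (2 * Pm)) ≤ 8 * ((K : ℝ) - 1) * A / (Δ * Pm) := by
    have heq : 4 / Δ * (A / (2 * Pm)) = 2 * A / (Δ * Pm) := by
      field_simp
      ring
    rw [heq]
    have hKcast : (2 : ℝ) ≤ (K : ℝ) := by exact_mod_cast hK2
    gcongr
    nlinarith
  exact le_trans hmain hfinal


end KCLStatement2
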